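/- Let x₀, y₀ ∈ ℝ, let u, g, h : [x₀,∞) × [y₀,∞) → [0,∞) be continuous, and let L, H : [x₀,∞) × [y₀,∞) × [0,∞) → [0,∞) be continuous and satisfy 0 ≤ L(x,y,u) − L(x,y,v) ≤ H(x,y,v)·(u − v) whenever u ≥ v ≥ 0. If u(x,y) ≤ g(x,y) + h(x,y) ∫_{x₀}^{x} ∫_{x₀}^{s} ∫_{y₀}^{y} L(η,τ,u(η,τ)) dτ dη ds for all x ≥ x₀ and y ≥ y₀, then u(x,y) ≤ g(x,y) + h(x,y) · ( ∫_{x₀}^{x} ∫_{x₀}^{s} ∫_{y₀}^{y} L(η,τ,g(η,τ)) dτ dη ds ) · exp( ∫_{x₀}^{x} ∫_{x₀}^{s} ∫_{y₀}^{y} H(η,τ,g(η,τ)) h(η,τ) dτ dη ds ) for all x ≥ x₀ and y ≥ y₀. -/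

import Mathlib

set_option maxHeartbeats 1000000

open MeasureTheory intervalIntegral Set Filter Topology

lemma exists_cont_ext {X : Type*} [TopologicalSpace X] [NormalSpace X] {s : Set X}
    (hs : IsClosed s) {f : X → ℝ} (hf : ContinuousOn f s) :
    ∃ F : X → ℝ, Continuous F ∧ ∀ p ∈ s, F p = f p := by
  obtain ⟨g, hg⟩ := ContinuousMap.exists_restrict_eq (Y := ℝ) hs ⟨s.restrict f, hf.restrict⟩
  refine ⟨g, g.continuous, fun p hp => ?_⟩
  have := DFunLike.congr_fun hg (⟨p, hp⟩ : s)
  exact this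

lemma double_int_pow (x₀ t : ℝ) (m : ℕ) :
    (∫ s in x₀..t, ∫ η in x₀..s, (η - x₀) ^ m)
      = (t - x₀) ^ (m + 2) / ((m + 1) * (m + 2)) := by
  have inner : ∀ s : ℝ, (∫ η in x₀..s, (η - x₀) ^ m) = (s - x₀) ^ (m + 1) / (m + 1) := by
    intro s
    rw [intervalIntegral.integral_comp_sub_right (fun x => x ^ m) x₀]
    simp [integral_pow]
  rw [intervalIntegral.integral_congr (g := fun s => (s - x₀) ^ (m+1) / (m+1))
    (fun s _ => inner s)]
  rw [intervalIntegral.integral_div]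
  rw [intervalIntegral.integral_comp_sub_right (fun x => x ^ (m+1)) x₀]
  rw [sub_self, integral_pow]
  have h1 : ((m:ℝ)+1) ≠ 0 := by positivity
  have h2 : ((m:ℝ)+2) ≠ 0 := by positivity
  push_cast
  field_simp
  ring_nf

lemma gronwall_core (x₀ : ℝ) (cu a b : ℝ → ℝ)
    (hcu : Continuous cu) (ha : Continuous a) (hb : Continuous b)
    (ha0 : ∀ s, x₀ ≤ s → 0 ≤ a s) (hb0 : ∀ s, x₀ ≤ s → 0 ≤ b s)
    (key : ∀ s, x₀ ≤ s → cu s ≤ a s + b s * ∫ p in x₀..s, ∫ η in x₀..p, cu η) :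
    ∀ x, x₀ ≤ x → (∫ s in x₀..x, ∫ η in x₀..s, cu η) ≤
      (∫ s in x₀..x, ∫ η in x₀..s, a η) * Real.exp (∫ s in x₀..x, ∫ η in x₀..s, b η) := by
  intro x hx
  -- primitives
  set C : ℝ → ℝ := fun s => ∫ η in x₀..s, cu η with hC
  have Ccont : Continuous C :=
    intervalIntegral.continuous_primitive (fun _ _ => hcu.intervalIntegrable _ _) x₀
  set z : ℝ → ℝ := fun t => ∫ s in x₀..t, C s with hz
  have zcont : Continuous z :=
    intervalIntegral.continuous_primitive (fun _ _ => Ccont.intervalIntegrable _ _) x₀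
  set A₁ : ℝ → ℝ := fun s => ∫ η in x₀..s, a η with hA₁
  have A₁cont : Continuous A₁ :=
    intervalIntegral.continuous_primitive (fun _ _ => ha.intervalIntegrable _ _) x₀
  set A : ℝ → ℝ := fun t => ∫ s in x₀..t, A₁ s with hA
  have Acont : Continuous A :=
    intervalIntegral.continuous_primitive (fun _ _ => A₁cont.intervalIntegrable _ _) x₀
  set B₁ : ℝ → ℝ := fun s => ∫ η in x₀..s, b η with hB₁
  have B₁cont : Continuous B₁ :=
    intervalIntegral.continuous_primitive (fun _ _ => hb.intervalIntegrable _ _) x₀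
  set B : ℝ → ℝ := fun t => ∫ s in x₀..t, B₁ s with hB
  have Bcont : Continuous B :=
    intervalIntegral.continuous_primitive (fun _ _ => B₁cont.intervalIntegrable _ _) x₀
  set E : ℝ → ℝ := fun t => Real.exp (B t) with hE
  have Econt : Continuous E := Real.continuous_exp.comp Bcont
  set w : ℝ → ℝ := fun t => A t * E t with hw
  have wcont : Continuous w := Acont.mul Econt
  -- derivatives
  have hA₁d : ∀ t, HasDerivAt A₁ (a t) t := fun t =>
    intervalIntegral.integral_hasDerivAt_right (ha.intervalIntegrable _ _)
      ha.aestronglyMeasurable.stronglyMeasurableAtFilter ha.continuousAt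
  have hAd : ∀ t, HasDerivAt A (A₁ t) t := fun t =>
    intervalIntegral.integral_hasDerivAt_right (A₁cont.intervalIntegrable _ _)
      A₁cont.aestronglyMeasurable.stronglyMeasurableAtFilter A₁cont.continuousAt
  have hB₁d : ∀ t, HasDerivAt B₁ (b t) t := fun t =>
    intervalIntegral.integral_hasDerivAt_right (hb.intervalIntegrable _ _)
      hb.aestronglyMeasurable.stronglyMeasurableAtFilter hb.continuousAt
  have hBd : ∀ t, HasDerivAt B (B₁ t) t := fun t =>
    intervalIntegral.integral_hasDerivAt_right (B₁cont.intervalIntegrable _ _)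
      B₁cont.aestronglyMeasurable.stronglyMeasurableAtFilter B₁cont.continuousAt
  have hEd : ∀ t, HasDerivAt E (Real.exp (B t) * B₁ t) t := fun t => (hBd t).exp
  have hwd : ∀ t, HasDerivAt w (A₁ t * E t + A t * (Real.exp (B t) * B₁ t)) t := fun t =>
    (hAd t).mul (hEd t)
  -- nonnegativity on Ici x₀
  have hA₁0 : ∀ t, x₀ ≤ t → 0 ≤ A₁ t := fun t ht =>
    intervalIntegral.integral_nonneg ht (fun s hs => ha0 s hs.1)
  have hA0 : ∀ t, x₀ ≤ t → 0 ≤ A t := fun t ht =>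
    intervalIntegral.integral_nonneg ht (fun s hs => hA₁0 s hs.1)
  have hB₁0 : ∀ t, x₀ ≤ t → 0 ≤ B₁ t := fun t ht =>
    intervalIntegral.integral_nonneg ht (fun s hs => hb0 s hs.1)
  have hB0 : ∀ t, x₀ ≤ t → 0 ≤ B t := fun t ht =>
    intervalIntegral.integral_nonneg ht (fun s hs => hB₁0 s hs.1)
  have hE1 : ∀ t, x₀ ≤ t → 1 ≤ E t := fun t ht => Real.one_le_exp (hB0 t ht)
  -- the comparison function q
  set P : ℝ → ℝ := fun s => ∫ η in x₀..s, (a η + b η * w η) with hP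
  have Pint : Continuous (fun η => a η + b η * w η) := ha.add (hb.mul wcont)
  have Pcont : Continuous P :=
    intervalIntegral.continuous_primitive (fun _ _ => Pint.intervalIntegrable _ _) x₀
  set q : ℝ → ℝ := fun t => ∫ s in x₀..t, P s with hq
  have hPd : ∀ t, HasDerivAt P (a t + b t * w t) t := fun t =>
    intervalIntegral.integral_hasDerivAt_right (Pint.intervalIntegrable _ _)
      Pint.aestronglyMeasurable.stronglyMeasurableAtFilter Pint.continuousAt
  have hqd : ∀ t, HasDerivAt q (P t) t := fun t =>
    intervalIntegral.integral_hasDerivAt_right (Pcont.intervalIntegrable _ _)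
      Pcont.aestronglyMeasurable.stronglyMeasurableAtFilter Pcont.continuousAt
  -- first monotone function : D₁ = w' - P
  set D₁ : ℝ → ℝ := fun t => (A₁ t * E t + A t * (Real.exp (B t) * B₁ t)) - P t with hD₁
  have hD₁d : ∀ t, HasDerivAt D₁
      (((a t * E t + A₁ t * (Real.exp (B t) * B₁ t)) +
        (A₁ t * (Real.exp (B t) * B₁ t) +
          A t * (Real.exp (B t) * B₁ t * B₁ t + Real.exp (B t) * b t))) - (a t + b t * w t)) t := by
    intro t
    have h1 : HasDerivAt (fun t => A₁ t * E t) (a t * E t + A₁ t * (Real.exp (B t) * B₁ t)) t :=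
      (hA₁d t).mul (hEd t)
    have h2 : HasDerivAt (fun t => Real.exp (B t) * B₁ t)
        (Real.exp (B t) * B₁ t * B₁ t + Real.exp (B t) * b t) t := (hBd t).exp.mul (hB₁d t)
    exact ((h1.add ((hAd t).mul h2)).sub (hPd t))
  have hD₁deriv_nonneg : ∀ t, x₀ ≤ t →
      0 ≤ ((a t * E t + A₁ t * (Real.exp (B t) * B₁ t)) +
        (A₁ t * (Real.exp (B t) * B₁ t) +
          A t * (Real.exp (B t) * B₁ t * B₁ t + Real.exp (B t) * b t))) - (a t + b t * w t) := by
    intro t ht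
    have e1 : 1 ≤ E t := hE1 t ht
    have e0 : 0 < Real.exp (B t) := Real.exp_pos _
    have hEB : Real.exp (B t) = E t := rfl
    have h1 : 0 ≤ a t * (E t - 1) := mul_nonneg (ha0 t ht) (by linarith)
    have h2 : 0 ≤ A₁ t * (E t * B₁ t) :=
      mul_nonneg (hA₁0 t ht) (mul_nonneg e0.le (hB₁0 t ht))
    have h3 : 0 ≤ A t * (E t * B₁ t * B₁ t) :=
      mul_nonneg (hA0 t ht) (mul_nonneg (mul_nonneg e0.le (hB₁0 t ht)) (hB₁0 t ht))
    have hwt : w t = A t * E t := rfl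
    rw [hEB, hwt]
    nlinarith [h1, h2, h3]
  have D₁cont : Continuous D₁ := by
    have : Differentiable ℝ D₁ := fun t => (hD₁d t).differentiableAt
    exact this.continuous
  have monoD₁ : MonotoneOn D₁ (Ici x₀) := by
    apply monotoneOn_of_deriv_nonneg (convex_Ici x₀) D₁cont.continuousOn
    · intro t _
      exact (hD₁d t).differentiableAt.differentiableWithinAt
    · intro t ht
      rw [interior_Ici] at ht
      rw [(hD₁d t).deriv]
      exact hD₁deriv_nonneg t (le_of_lt ht)
  have hD₁x₀ : D₁ x₀ = 0 := by
    simp [hD₁, hA₁, hA, hP, intervalIntegral.integral_same]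
  have hD₁nonneg : ∀ t, x₀ ≤ t → 0 ≤ D₁ t := by
    intro t ht
    have := monoD₁ (self_mem_Ici) ht ht
    rw [hD₁x₀] at this
    exact this
  -- second monotone function : w - q
  set D : ℝ → ℝ := fun t => w t - q t with hD
  have hDd : ∀ t, HasDerivAt D (D₁ t) t := fun t => by
    have := (hwd t).sub (hqd t)
    exact this
  have monoD : MonotoneOn D (Ici x₀) := by
    apply monotoneOn_of_deriv_nonneg (convex_Ici x₀)
      ((wcont.sub (intervalIntegral.continuous_primitive
        (fun _ _ => Pcont.intervalIntegrable _ _) x₀)).continuousOn)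
    · intro t _
      exact (hDd t).differentiableAt.differentiableWithinAt
    · intro t ht
      rw [interior_Ici] at ht
      change 0 ≤ deriv D t
      rw [(hDd t).deriv]
      exact hD₁nonneg t (le_of_lt ht)
  have hDx₀ : D x₀ = 0 := by
    simp [hD, hw, hA, hq, intervalIntegral.integral_same]
  have hqw : ∀ t, x₀ ≤ t → q t ≤ w t := by
    intro t ht
    have := monoD (self_mem_Ici) ht ht
    rw [hDx₀] at this
    have : (0:ℝ) ≤ w t - q t := this
    linarith
  -- the deficiency d
  set d : ℝ → ℝ := fun t => z t - w t with hd_def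
  have dcont : Continuous d := zcont.sub wcont
  have bdcont : Continuous (fun η => b η * d η) := hb.mul dcont
  have Rcont : Continuous (fun s => ∫ η in x₀..s, b η * d η) :=
    intervalIntegral.continuous_primitive (fun _ _ => bdcont.intervalIntegrable _ _) x₀
  have azcont : Continuous (fun η => a η + b η * z η) := ha.add (hb.mul zcont)
  have azprimcont : Continuous (fun s => ∫ η in x₀..s, (a η + b η * z η)) :=
    intervalIntegral.continuous_primitive (fun _ _ => azcont.intervalIntegrable _ _) x₀
  have hd : ∀ t, x₀ ≤ t → d t ≤ ∫ s in x₀..t, ∫ η in x₀..s, b η * d η := by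
    intro t ht
    have step1 : z t ≤ ∫ s in x₀..t, ∫ η in x₀..s, (a η + b η * z η) := by
      apply intervalIntegral.integral_mono_on ht (Ccont.intervalIntegrable _ _)
        (azprimcont.intervalIntegrable _ _)
      intro s hs
      apply intervalIntegral.integral_mono_on hs.1 (hcu.intervalIntegrable _ _)
        (azcont.intervalIntegrable _ _)
      intro η hη
      exact key η hη.1
    have inner_eq : ∀ s : ℝ, (∫ η in x₀..s, (a η + b η * z η))
        = (∫ η in x₀..s, (a η + b η * w η)) + ∫ η in x₀..s, b η * d η := by
      intro s
      rw [← intervalIntegral.integral_add (Pint.intervalIntegrable _ _)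
        (bdcont.intervalIntegrable _ _)]
      apply intervalIntegral.integral_congr
      intro η _
      simp only [hd_def]
      ring
    have outer_eq : (∫ s in x₀..t, ∫ η in x₀..s, (a η + b η * z η))
        = q t + ∫ s in x₀..t, ∫ η in x₀..s, b η * d η := by
      rw [intervalIntegral.integral_congr (g := fun s =>
          (∫ η in x₀..s, (a η + b η * w η)) + ∫ η in x₀..s, b η * d η)
          (fun s _ => inner_eq s)]
      rw [intervalIntegral.integral_add (Pcont.intervalIntegrable _ _)
        (Rcont.intervalIntegrable _ _)]
    have := step1.trans (le_of_eq outer_eq)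
    have hq_le : q t ≤ w t := hqw t ht
    simp only [hd_def]
    linarith
  -- iteration
  obtain ⟨Md, hMd⟩ := (isCompact_Icc (a := x₀) (b := x)).exists_bound_of_continuousOn
    dcont.continuousOn
  obtain ⟨Kb, hKb⟩ := (isCompact_Icc (a := x₀) (b := x)).exists_bound_of_continuousOn
    hb.continuousOn
  set M : ℝ := max Md 0 with hM_def
  set K : ℝ := max Kb 0 with hK_def
  have hM0 : 0 ≤ M := le_max_right _ _
  have hK0 : 0 ≤ K := le_max_right _ _
  have hM : ∀ t ∈ Icc x₀ x, d t ≤ M := by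
    intro t ht
    have h := hMd t ht
    rw [Real.norm_eq_abs] at h
    exact (le_abs_self _).trans (h.trans (le_max_left _ _))
  have hK : ∀ t ∈ Icc x₀ x, b t ≤ K := by
    intro t ht
    have := hKb t ht
    rw [Real.norm_eq_abs] at this
    exact (le_abs_self _).trans (this.trans (le_max_left _ _))
  have claim : ∀ n : ℕ, ∀ t ∈ Icc x₀ x,
      d t ≤ M * K ^ n * (t - x₀) ^ (2 * n) / (Nat.factorial (2 * n)) := by
    intro n
    induction n with
    | zero =>
      intro t ht
      simpa using hM t ht
    | succ n ih =>
      intro t ht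
      set c₀ : ℝ := K * (M * K ^ n / (Nat.factorial (2 * n))) with hc₀
      have pt : ∀ η ∈ Icc x₀ x, b η * d η ≤ c₀ * (η - x₀) ^ (2 * n) := by
        intro η hη
        have hsub : (0:ℝ) ≤ η - x₀ := sub_nonneg.2 hη.1
        have hbnd0 : 0 ≤ M * K ^ n * (η - x₀) ^ (2 * n) / (Nat.factorial (2 * n)) := by
          positivity
        rcases le_or_gt 0 (d η) with hpos | hneg
        · calc b η * d η ≤ K * (M * K ^ n * (η - x₀) ^ (2 * n) / (Nat.factorial (2 * n))) :=
                mul_le_mul (hK η hη) (ih η hη) hpos hK0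
            _ = c₀ * (η - x₀) ^ (2 * n) := by rw [hc₀]; ring
        · have h1 : b η * d η ≤ 0 := mul_nonpos_of_nonneg_of_nonpos (hb0 η hη.1) hneg.le
          have h2 : 0 ≤ c₀ * (η - x₀) ^ (2 * n) := by
            rw [hc₀]; positivity
          linarith
      have powcont : Continuous (fun η : ℝ => c₀ * (η - x₀) ^ (2 * n)) :=
        continuous_const.mul ((continuous_id.sub continuous_const).pow _)
      have powprimcont : Continuous (fun s => ∫ η in x₀..s, c₀ * (η - x₀) ^ (2 * n)) :=
        intervalIntegral.continuous_primitive (fun _ _ => powcont.intervalIntegrable _ _) x₀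
      have h1 : ∀ s ∈ Icc x₀ x, (∫ η in x₀..s, b η * d η)
          ≤ ∫ η in x₀..s, c₀ * (η - x₀) ^ (2 * n) := by
        intro s hs
        apply intervalIntegral.integral_mono_on hs.1 (bdcont.intervalIntegrable _ _)
          (powcont.intervalIntegrable _ _)
        intro η hη
        exact pt η ⟨hη.1, hη.2.trans hs.2⟩
      have h2 : d t ≤ ∫ s in x₀..t, ∫ η in x₀..s, c₀ * (η - x₀) ^ (2 * n) := by
        refine (hd t ht.1).trans ?_
        apply intervalIntegral.integral_mono_on ht.1 (Rcont.intervalIntegrable _ _)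
          (powprimcont.intervalIntegrable _ _)
        intro s hs
        exact h1 s ⟨hs.1, hs.2.trans ht.2⟩
      have h3 : (∫ s in x₀..t, ∫ η in x₀..s, c₀ * (η - x₀) ^ (2 * n))
          = c₀ * ((t - x₀) ^ (2 * n + 2) / ((2 * n + 1) * (2 * n + 2))) := by
        simp only [intervalIntegral.integral_const_mul]
        rw [double_int_pow]
        push_cast
        ring
      rw [h3] at h2
      refine h2.trans (le_of_eq ?_)
      have hfact : ((Nat.factorial (2 * (n + 1))) : ℝ)
          = ((2 * n + 2) * ((2 * n + 1) * (Nat.factorial (2 * n)))) := by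
        have e : 2 * (n + 1) = (2 * n + 1) + 1 := by ring
        rw [e, Nat.factorial_succ, Nat.factorial_succ]
        push_cast
        ring
      have hfne : ((Nat.factorial (2 * n)) : ℝ) ≠ 0 := by positivity
      have he : 2 * (n + 1) = 2 * n + 2 := by ring
      rw [he] at hfact ⊢
      rw [hfact, hc₀]
      have c1 : ((2:ℝ) * n + 1) ≠ 0 := by positivity
      have c2 : ((2:ℝ) * n + 2) ≠ 0 := by positivity
      field_simp
      ring
  -- limit
  have hlim : Tendsto (fun n : ℕ => M * K ^ n * (x - x₀) ^ (2 * n) / (Nat.factorial (2 * n)))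
      atTop (𝓝 0) := by
    set r : ℝ := K * (x - x₀) ^ 2 with hr
    have hr0 : 0 ≤ r := by positivity
    have hub : ∀ n : ℕ, M * K ^ n * (x - x₀) ^ (2 * n) / (Nat.factorial (2 * n))
        ≤ M * (r ^ n / (Nat.factorial n)) := by
      intro n
      have e1 : K ^ n * (x - x₀) ^ (2 * n) = r ^ n := by
        rw [hr, mul_pow, pow_mul]
      have hfle : ((Nat.factorial n) : ℝ) ≤ (Nat.factorial (2 * n)) := by
        exact_mod_cast Nat.factorial_le (by omega)
      have hf0 : (0:ℝ) < (Nat.factorial n) := by positivity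
      have h := div_le_div_of_nonneg_left (pow_nonneg hr0 n) hf0 hfle
      calc M * K ^ n * (x - x₀) ^ (2 * n) / (Nat.factorial (2 * n))
          = M * (r ^ n / (Nat.factorial (2 * n))) := by rw [← e1]; ring
        _ ≤ M * (r ^ n / (Nat.factorial n)) := by
            apply mul_le_mul_of_nonneg_left _ hM0
            exact h
    have hnn : ∀ n : ℕ, 0 ≤ M * K ^ n * (x - x₀) ^ (2 * n) / (Nat.factorial (2 * n)) := by
      intro n
      have : (0:ℝ) ≤ (x - x₀) ^ (2 * n) := by
        rw [pow_mul]; positivity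
      positivity
    have htend : Tendsto (fun n : ℕ => M * (r ^ n / (Nat.factorial n))) atTop (𝓝 0) := by
      have := (FloorSemiring.tendsto_pow_div_factorial_atTop (K := ℝ) r).const_mul M
      simpa using this
    exact squeeze_zero hnn hub htend
  have hdx : d x ≤ 0 := ge_of_tendsto' hlim (fun n => claim n x ⟨hx, le_refl x⟩)
  have : z x ≤ w x := by
    simp only [hd_def] at hdx
    linarith
  exact this


/-- Continuous (𝕋₁ = 𝕋₂ = ℝ) case of Theorem 2.3: a nonlinear Gronwall-type
inequality whose kernel L satisfies a one-sided Lipschitz condition with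
comparison function H. -/
theorem stmt_4 (x₀ y₀ : ℝ) (u g h : ℝ → ℝ → ℝ) (L H : ℝ → ℝ → ℝ → ℝ)
    (hu_cont : ContinuousOn (fun z : ℝ × ℝ => u z.1 z.2) (Set.Ici x₀ ×ˢ Set.Ici y₀))
    (hg_cont : ContinuousOn (fun z : ℝ × ℝ => g z.1 z.2) (Set.Ici x₀ ×ˢ Set.Ici y₀))
    (hh_cont : ContinuousOn (fun z : ℝ × ℝ => h z.1 z.2) (Set.Ici x₀ ×ˢ Set.Ici y₀))
    (hL_cont : ContinuousOn (fun z : ℝ × ℝ × ℝ => L z.1 z.2.1 z.2.2)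
      (Set.Ici x₀ ×ˢ Set.Ici y₀ ×ˢ Set.Ici (0 : ℝ)))
    (hH_cont : ContinuousOn (fun z : ℝ × ℝ × ℝ => H z.1 z.2.1 z.2.2)
      (Set.Ici x₀ ×ˢ Set.Ici y₀ ×ˢ Set.Ici (0 : ℝ)))
    (hu_nonneg : ∀ x y, x₀ ≤ x → y₀ ≤ y → 0 ≤ u x y)
    (hg_nonneg : ∀ x y, x₀ ≤ x → y₀ ≤ y → 0 ≤ g x y)
    (hh_nonneg : ∀ x y, x₀ ≤ x → y₀ ≤ y → 0 ≤ h x y)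
    (hL_nonneg : ∀ x y z, x₀ ≤ x → y₀ ≤ y → 0 ≤ z → 0 ≤ L x y z)
    (hH_nonneg : ∀ x y z, x₀ ≤ x → y₀ ≤ y → 0 ≤ z → 0 ≤ H x y z)
    (hLip : ∀ x y a b, x₀ ≤ x → y₀ ≤ y → 0 ≤ b → b ≤ a →
      0 ≤ L x y a - L x y b ∧ L x y a - L x y b ≤ H x y b * (a - b))
    (hineq : ∀ x y, x₀ ≤ x → y₀ ≤ y →
      u x y ≤ g x y + h x y *
        ∫ s in x₀..x, ∫ η in x₀..s, ∫ τ in y₀..y, L η τ (u η τ)) :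
    ∀ x y, x₀ ≤ x → y₀ ≤ y →
      u x y ≤ g x y + h x y *
        (∫ s in x₀..x, ∫ η in x₀..s, ∫ τ in y₀..y, L η τ (g η τ)) *
        Real.exp (∫ s in x₀..x, ∫ η in x₀..s, ∫ τ in y₀..y,
          H η τ (g η τ) * h η τ) := by
  -- global continuous extensions
  have hS2 : IsClosed (Set.Ici x₀ ×ˢ Set.Ici y₀) := isClosed_Ici.prod isClosed_Ici
  have hS3 : IsClosed (Set.Ici x₀ ×ˢ Set.Ici y₀ ×ˢ Set.Ici (0 : ℝ)) :=
    isClosed_Ici.prod (isClosed_Ici.prod isClosed_Ici)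
  obtain ⟨U, Ucont, hUeq⟩ := exists_cont_ext hS2 hu_cont
  obtain ⟨G, Gcont, hGeq⟩ := exists_cont_ext hS2 hg_cont
  obtain ⟨Hf, Hfcont, hHfeq⟩ := exists_cont_ext hS2 hh_cont
  obtain ⟨LL, LLcont, hLLeq⟩ := exists_cont_ext hS3 hL_cont
  obtain ⟨HH, HHcont, hHHeq⟩ := exists_cont_ext hS3 hH_cont
  have eU : ∀ a b, x₀ ≤ a → y₀ ≤ b → U (a, b) = u a b := fun a b ha hb =>
    hUeq (a, b) ⟨ha, hb⟩
  have eG : ∀ a b, x₀ ≤ a → y₀ ≤ b → G (a, b) = g a b := fun a b ha hb =>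
    hGeq (a, b) ⟨ha, hb⟩
  have eHf : ∀ a b, x₀ ≤ a → y₀ ≤ b → Hf (a, b) = h a b := fun a b ha hb =>
    hHfeq (a, b) ⟨ha, hb⟩
  have eL : ∀ a b c, x₀ ≤ a → y₀ ≤ b → 0 ≤ c → LL (a, b, c) = L a b c := fun a b c ha hb hc =>
    hLLeq (a, b, c) ⟨ha, hb, hc⟩
  have eHH : ∀ a b c, x₀ ≤ a → y₀ ≤ b → 0 ≤ c → HH (a, b, c) = H a b c := fun a b c ha hb hc =>
    hHHeq (a, b, c) ⟨ha, hb, hc⟩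
  -- congruences of integrals with extended functions
  have congru : ∀ (η y' : ℝ), x₀ ≤ η → y₀ ≤ y' →
      (∫ τ in y₀..y', L η τ (u η τ)) = ∫ τ in y₀..y', LL (η, τ, U (η, τ)) := by
    intro η y' hη hy'
    apply intervalIntegral.integral_congr
    intro τ hτ
    rw [Set.uIcc_of_le hy'] at hτ
    show L η τ (u η τ) = LL (η, τ, U (η, τ))
    rw [eU η τ hη hτ.1, eL η τ _ hη hτ.1 (hu_nonneg η τ hη hτ.1)]
  have congrg : ∀ (η y' : ℝ), x₀ ≤ η → y₀ ≤ y' →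
      (∫ τ in y₀..y', L η τ (g η τ)) = ∫ τ in y₀..y', LL (η, τ, G (η, τ)) := by
    intro η y' hη hy'
    apply intervalIntegral.integral_congr
    intro τ hτ
    rw [Set.uIcc_of_le hy'] at hτ
    show L η τ (g η τ) = LL (η, τ, G (η, τ))
    rw [eG η τ hη hτ.1, eL η τ _ hη hτ.1 (hg_nonneg η τ hη hτ.1)]
  have congrb : ∀ (η y' : ℝ), x₀ ≤ η → y₀ ≤ y' →
      (∫ τ in y₀..y', H η τ (g η τ) * h η τ)
        = ∫ τ in y₀..y', HH (η, τ, G (η, τ)) * Hf (η, τ) := by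
    intro η y' hη hy'
    apply intervalIntegral.integral_congr
    intro τ hτ
    rw [Set.uIcc_of_le hy'] at hτ
    show H η τ (g η τ) * h η τ = HH (η, τ, G (η, τ)) * Hf (η, τ)
    rw [eG η τ hη hτ.1, eHf η τ hη hτ.1,
      eHH η τ _ hη hτ.1 (hg_nonneg η τ hη hτ.1)]
  have triple_congr_u : ∀ (x' y' : ℝ), x₀ ≤ x' → y₀ ≤ y' →
      (∫ s in x₀..x', ∫ η in x₀..s, ∫ τ in y₀..y', L η τ (u η τ))
        = ∫ s in x₀..x', ∫ η in x₀..s, ∫ τ in y₀..y', LL (η, τ, U (η, τ)) := by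
    intro x' y' hx' hy'
    apply intervalIntegral.integral_congr
    intro s hs
    rw [Set.uIcc_of_le hx'] at hs
    apply intervalIntegral.integral_congr
    intro η hη
    rw [Set.uIcc_of_le hs.1] at hη
    exact congru η y' hη.1 hy'
  have triple_congr_g : ∀ (x' y' : ℝ), x₀ ≤ x' → y₀ ≤ y' →
      (∫ s in x₀..x', ∫ η in x₀..s, ∫ τ in y₀..y', L η τ (g η τ))
        = ∫ s in x₀..x', ∫ η in x₀..s, ∫ τ in y₀..y', LL (η, τ, G (η, τ)) := by
    intro x' y' hx' hy'
    apply intervalIntegral.integral_congr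
    intro s hs
    rw [Set.uIcc_of_le hx'] at hs
    apply intervalIntegral.integral_congr
    intro η hη
    rw [Set.uIcc_of_le hs.1] at hη
    exact congrg η y' hη.1 hy'
  have triple_congr_b : ∀ (x' y' : ℝ), x₀ ≤ x' → y₀ ≤ y' →
      (∫ s in x₀..x', ∫ η in x₀..s, ∫ τ in y₀..y', H η τ (g η τ) * h η τ)
        = ∫ s in x₀..x', ∫ η in x₀..s, ∫ τ in y₀..y', HH (η, τ, G (η, τ)) * Hf (η, τ) := by
    intro x' y' hx' hy'
    apply intervalIntegral.integral_congr
    intro s hs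
    rw [Set.uIcc_of_le hx'] at hs
    apply intervalIntegral.integral_congr
    intro η hη
    rw [Set.uIcc_of_le hs.1] at hη
    exact congrb η y' hη.1 hy'
  intro x y hx hy
  -- one-variable data for the fixed y
  set cu : ℝ → ℝ := fun η => ∫ τ in y₀..y, LL (η, τ, U (η, τ)) with hcu_def
  set af : ℝ → ℝ := fun η => ∫ τ in y₀..y, LL (η, τ, G (η, τ)) with haf_def
  set bf : ℝ → ℝ := fun η => ∫ τ in y₀..y, HH (η, τ, G (η, τ)) * Hf (η, τ) with hbf_def
  have cucont : Continuous cu := by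
    apply intervalIntegral.continuous_parametric_intervalIntegral_of_continuous'
      (f := fun η τ => LL (η, τ, U (η, τ)))
    exact LLcont.comp (continuous_fst.prodMk (continuous_snd.prodMk
      (Ucont.comp (continuous_fst.prodMk continuous_snd))))
  have afcont : Continuous af := by
    apply intervalIntegral.continuous_parametric_intervalIntegral_of_continuous'
      (f := fun η τ => LL (η, τ, G (η, τ)))
    exact LLcont.comp (continuous_fst.prodMk (continuous_snd.prodMk
      (Gcont.comp (continuous_fst.prodMk continuous_snd))))
  have bfcont : Continuous bf := by
    apply intervalIntegral.continuous_parametric_intervalIntegral_of_continuous'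
      (f := fun η τ => HH (η, τ, G (η, τ)) * Hf (η, τ))
    exact ((HHcont.comp (continuous_fst.prodMk (continuous_snd.prodMk
      (Gcont.comp (continuous_fst.prodMk continuous_snd))))).mul
      (Hfcont.comp (continuous_fst.prodMk continuous_snd)))
  -- nonnegativity
  have cu0 : ∀ η, x₀ ≤ η → 0 ≤ cu η := by
    intro η hη
    apply intervalIntegral.integral_nonneg hy
    intro τ hτ
    rw [eU η τ hη hτ.1, eL η τ _ hη hτ.1 (hu_nonneg η τ hη hτ.1)]
    exact hL_nonneg η τ _ hη hτ.1 (hu_nonneg η τ hη hτ.1)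
  have af0 : ∀ η, x₀ ≤ η → 0 ≤ af η := by
    intro η hη
    apply intervalIntegral.integral_nonneg hy
    intro τ hτ
    rw [eG η τ hη hτ.1, eL η τ _ hη hτ.1 (hg_nonneg η τ hη hτ.1)]
    exact hL_nonneg η τ _ hη hτ.1 (hg_nonneg η τ hη hτ.1)
  have bf0 : ∀ η, x₀ ≤ η → 0 ≤ bf η := by
    intro η hη
    apply intervalIntegral.integral_nonneg hy
    intro τ hτ
    rw [eG η τ hη hτ.1, eHf η τ hη hτ.1, eHH η τ _ hη hτ.1 (hg_nonneg η τ hη hτ.1)]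
    exact mul_nonneg (hH_nonneg η τ _ hη hτ.1 (hg_nonneg η τ hη hτ.1))
      (hh_nonneg η τ hη hτ.1)
  -- z and its nonnegativity
  set z : ℝ → ℝ := fun t => ∫ s in x₀..t, ∫ η in x₀..s, cu η with hz_def
  have Cprimcont : Continuous (fun s => ∫ η in x₀..s, cu η) :=
    intervalIntegral.continuous_primitive (fun _ _ => cucont.intervalIntegrable _ _) x₀
  have hz0 : ∀ t, x₀ ≤ t → 0 ≤ z t := by
    intro t ht
    apply intervalIntegral.integral_nonneg ht
    intro s hs
    exact intervalIntegral.integral_nonneg hs.1 (fun η hη => cu0 η hη.1)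
  -- pointwise bound from hineq
  have hu_le : ∀ η τ, x₀ ≤ η → y₀ ≤ τ → τ ≤ y → u η τ ≤ g η τ + h η τ * z η := by
    intro η τ hη hτ hτy
    have h0 := hineq η τ hη hτ
    rw [triple_congr_u η τ hη hτ] at h0
    have cuτcont : Continuous (fun η' => ∫ τ' in y₀..τ, LL (η', τ', U (η', τ'))) := by
      apply intervalIntegral.continuous_parametric_intervalIntegral_of_continuous'
        (f := fun η' τ' => LL (η', τ', U (η', τ')))
      exact LLcont.comp (continuous_fst.prodMk (continuous_snd.prodMk
        (Ucont.comp (continuous_fst.prodMk continuous_snd))))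
    have cuτprimcont : Continuous (fun s => ∫ η' in x₀..s, ∫ τ' in y₀..τ, LL (η', τ', U (η', τ'))) :=
      intervalIntegral.continuous_primitive (fun _ _ => cuτcont.intervalIntegrable _ _) x₀
    have mono_inner : ∀ η', x₀ ≤ η' →
        (∫ τ' in y₀..τ, LL (η', τ', U (η', τ'))) ≤ cu η' := by
      intro η' hη'
      have fc : Continuous (fun τ' : ℝ => LL (η', τ', U (η', τ'))) :=
        LLcont.comp (continuous_const.prodMk (continuous_id.prodMk
          (Ucont.comp (continuous_const.prodMk continuous_id))))
      have hsplit := intervalIntegral.integral_add_adjacent_intervals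
        (fc.intervalIntegrable (μ := volume) y₀ τ) (fc.intervalIntegrable (μ := volume) τ y)
      have h2 : 0 ≤ ∫ τ' in τ..y, LL (η', τ', U (η', τ')) := by
        apply intervalIntegral.integral_nonneg hτy
        intro τ' hτ'
        have hτ'0 : y₀ ≤ τ' := le_trans hτ hτ'.1
        rw [eU η' τ' hη' hτ'0, eL η' τ' _ hη' hτ'0 (hu_nonneg η' τ' hη' hτ'0)]
        exact hL_nonneg η' τ' _ hη' hτ'0 (hu_nonneg η' τ' hη' hτ'0)
      have : cu η' = ∫ τ' in y₀..y, LL (η', τ', U (η', τ')) := rfl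
      rw [this]
      linarith [hsplit, h2]
    have hZ : (∫ s in x₀..η, ∫ η' in x₀..s, ∫ τ' in y₀..τ, LL (η', τ', U (η', τ')))
        ≤ z η := by
      apply intervalIntegral.integral_mono_on hη (cuτprimcont.intervalIntegrable _ _)
        (Cprimcont.intervalIntegrable _ _)
      intro s hs
      apply intervalIntegral.integral_mono_on hs.1 (cuτcont.intervalIntegrable _ _)
        (cucont.intervalIntegrable _ _)
      intro η' hη'
      exact mono_inner η' hη'.1
    have hh0 : 0 ≤ h η τ := hh_nonneg η τ hη hτ
    calc u η τ ≤ g η τ + h η τ *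
          ∫ s in x₀..η, ∫ η' in x₀..s, ∫ τ' in y₀..τ, LL (η', τ', U (η', τ')) := h0
      _ ≤ g η τ + h η τ * z η := by
          have := mul_le_mul_of_nonneg_left hZ hh0
          linarith
  -- the key differential-type inequality
  have key : ∀ η, x₀ ≤ η → cu η ≤ af η + bf η * z η := by
    intro η hη
    have zη0 : 0 ≤ z η := hz0 η hη
    have pw : ∀ τ ∈ Icc y₀ y, LL (η, τ, U (η, τ))
        ≤ LL (η, τ, G (η, τ)) + HH (η, τ, G (η, τ)) * Hf (η, τ) * z η := by
      intro τ hτ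
      have hga : 0 ≤ g η τ := hg_nonneg η τ hη hτ.1
      have hha : 0 ≤ h η τ := hh_nonneg η τ hη hτ.1
      have hu0 : 0 ≤ u η τ := hu_nonneg η τ hη hτ.1
      have h1 : u η τ ≤ g η τ + h η τ * z η := hu_le η τ hη hτ.1 hτ.2
      have hbig : g η τ ≤ g η τ + h η τ * z η := by nlinarith [mul_nonneg hha zη0]
      have hbig0 : 0 ≤ g η τ + h η τ * z η := le_trans hga hbig
      have l1 := (hLip η τ (g η τ + h η τ * z η) (u η τ) hη hτ.1 hu0 h1).1
      have l2 := (hLip η τ (g η τ + h η τ * z η) (g η τ) hη hτ.1 hga hbig).2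
      have e2 : (g η τ + h η τ * z η) - g η τ = h η τ * z η := by ring
      rw [e2] at l2
      rw [eU η τ hη hτ.1, eG η τ hη hτ.1, eHf η τ hη hτ.1,
        eL η τ _ hη hτ.1 hu0, eL η τ _ hη hτ.1 hga,
        eHH η τ _ hη hτ.1 hga, mul_assoc]
      nlinarith [l1, l2]
    have intU : IntervalIntegrable (fun τ => LL (η, τ, U (η, τ))) volume y₀ y :=
      (LLcont.comp (continuous_const.prodMk (continuous_id.prodMk
        (Ucont.comp (continuous_const.prodMk continuous_id))))).intervalIntegrable _ _
    have intG : IntervalIntegrable (fun τ => LL (η, τ, G (η, τ))) volume y₀ y :=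
      (LLcont.comp (continuous_const.prodMk (continuous_id.prodMk
        (Gcont.comp (continuous_const.prodMk continuous_id))))).intervalIntegrable _ _
    have intH : IntervalIntegrable (fun τ => HH (η, τ, G (η, τ)) * Hf (η, τ)) volume y₀ y :=
      (((HHcont.comp (continuous_const.prodMk (continuous_id.prodMk
        (Gcont.comp (continuous_const.prodMk continuous_id))))).mul
        (Hfcont.comp (continuous_const.prodMk continuous_id)))).intervalIntegrable _ _
    have intHz : IntervalIntegrable (fun τ => HH (η, τ, G (η, τ)) * Hf (η, τ) * z η)
        volume y₀ y := intH.mul_const _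
    have step : cu η ≤ ∫ τ in y₀..y,
        (LL (η, τ, G (η, τ)) + HH (η, τ, G (η, τ)) * Hf (η, τ) * z η) :=
      intervalIntegral.integral_mono_on hy intU (intG.add intHz) pw
    rw [intervalIntegral.integral_add intG intHz,
      intervalIntegral.integral_mul_const] at step
    exact step
  -- apply the one-variable Gronwall lemma
  have hcore := gronwall_core x₀ cu af bf cucont afcont bfcont af0 bf0 key x hx
  -- conclude
  have hfin : u x y ≤ g x y + h x y * z x := hu_le x y hx hy (le_refl y)
  have hh0 : 0 ≤ h x y := hh_nonneg x y hx hy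
  have e1 : (∫ s in x₀..x, ∫ η in x₀..s, ∫ τ in y₀..y, L η τ (g η τ))
      = ∫ s in x₀..x, ∫ η in x₀..s, af η := triple_congr_g x y hx hy
  have e2 : (∫ s in x₀..x, ∫ η in x₀..s, ∫ τ in y₀..y, H η τ (g η τ) * h η τ)
      = ∫ s in x₀..x, ∫ η in x₀..s, bf η := triple_congr_b x y hx hy
  rw [e1, e2, mul_assoc]
  have : z x ≤ (∫ s in x₀..x, ∫ η in x₀..s, af η) *
      Real.exp (∫ s in x₀..x, ∫ η in x₀..s, bf η) := hcore
  nlinarith [mul_le_mul_of_nonneg_left this hh0]
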